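/- arXiv:2508.13122 — 4 statements merged into one kernel-verified Lean document; each statement's English description precedes it below -/
import Mathlib

section
/- Let H : ℝ³ → ℂ be C³ with H(0) = 0, ∇H(0) = 0 and ‖H‖₃ < ∞. For ξ ∈ ℝ define D₁(H,ξ) = sup_{η ≠ 0} |H(η)|/(‖η‖² + ξ²). Then D₁(H,ξ) ≥ (1/57) · D₁(H,0)³ / (D₁(H,0)² + ‖H‖₃² ξ²). -/
noncomputable section
open scoped BigOperators
open Set

abbrev E3 := EuclideanSpace ℝ (Fin 3)

/-- `‖H‖₃`: supremum over all orders `≤ 3` and all points of the derivative norms. -/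
def norm3 (H : E3 → ℂ) : ℝ :=
  ⨆ t : Fin 4 × E3, ‖iteratedFDeriv ℝ (t.1 : ℕ) H t.2‖

/-- The GTW-style quantity `D₁(H, ξ)`. -/
def D1 (H : E3 → ℂ) (ξ : ℝ) : ℝ :=
  ⨆ η : {η : E3 // η ≠ 0}, ‖H (η : E3)‖ / (‖(η : E3)‖ ^ 2 + ξ ^ 2)

lemma within_eq {f : ℝ → ℂ} (hf : ContDiff ℝ 3 f) {b : ℝ} (hb : 0 < b) {k : ℕ} (hk : (k:ℕ∞) ≤ 3)
    {y : ℝ} (hy : y ∈ Icc (0:ℝ) b) :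
    iteratedDerivWithin k f (Icc 0 b) y = iteratedDeriv k f y := by
  have h := (hf.contDiffOn (s := univ)).ftaylorSeriesWithin uniqueDiffOn_univ
  have e1 := (h.mono (subset_univ (Icc 0 b))).eq_iteratedFDerivWithin_of_uniqueDiffOn
    (m := k) (by exact_mod_cast hk) (uniqueDiffOn_Icc hb) hy
  have e2 := h.eq_iteratedFDerivWithin_of_uniqueDiffOn (m := k)
    (by exact_mod_cast hk) uniqueDiffOn_univ (mem_univ y)
  rw [iteratedDerivWithin_eq_iteratedFDerivWithin, iteratedDeriv_eq_iteratedFDeriv,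
    ← e1, e2, iteratedFDerivWithin_univ]

lemma taylor2_bound {f : ℝ → ℂ} (hf : ContDiff ℝ 3 f) (h0 : f 0 = 0) (h1 : deriv f 0 = 0)
    {M b : ℝ} (hb : 0 < b) (hM : ∀ t : ℝ, ‖iteratedDeriv 3 f t‖ ≤ M) :
    ∀ x ∈ Set.Icc (0:ℝ) b, ‖f x - (x^2/2 : ℝ) • iteratedDeriv 2 f 0‖ ≤ M * x^3 / 2 := by
  intro x hx
  have h0b : (0:ℝ) ∈ Icc (0:ℝ) b := ⟨le_rfl, hb.le⟩
  have hrem := taylor_mean_remainder_bound (n := 2) hb.le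
    (hf.of_le (by norm_num)).contDiffOn hx
    (fun y hy => by rw [within_eq hf hb (by norm_num) hy]; exact hM y)
  have hT : taylorWithinEval f 2 (Icc 0 b) 0 x = (x^2/2 : ℝ) • iteratedDeriv 2 f 0 := by
    rw [taylor_within_apply]
    rw [Finset.sum_range_succ, Finset.sum_range_succ, Finset.sum_range_one]
    rw [within_eq hf hb (by norm_num) h0b, within_eq hf hb (by norm_num) h0b,
      within_eq hf hb (by norm_num) h0b]
    simp [iteratedDeriv_one, h0, h1]
    norm_num [Nat.factorial]
    exact Or.inl (by ring)
  rw [hT] at hrem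
  convert hrem using 2 <;> norm_num

lemma taylor1_bound {f : ℝ → ℂ} (hf : ContDiff ℝ 3 f) (h0 : f 0 = 0) (h1 : deriv f 0 = 0)
    {M b : ℝ} (hb : 0 < b) (hM : ∀ t : ℝ, ‖iteratedDeriv 2 f t‖ ≤ M) :
    ∀ x ∈ Set.Icc (0:ℝ) b, ‖f x‖ ≤ M * x^2 := by
  intro x hx
  have h0b : (0:ℝ) ∈ Icc (0:ℝ) b := ⟨le_rfl, hb.le⟩
  have hrem := taylor_mean_remainder_bound (n := 1) hb.le
    (hf.of_le (by norm_num)).contDiffOn hx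
    (fun y hy => by rw [within_eq hf hb (by norm_num) hy]; exact hM y)
  have hT : taylorWithinEval f 1 (Icc 0 b) 0 x = 0 := by
    rw [taylor_within_apply]
    rw [Finset.sum_range_succ, Finset.sum_range_one]
    rw [within_eq hf hb (by norm_num) h0b, within_eq hf hb (by norm_num) h0b]
    simp [iteratedDeriv_one, h0, h1]
  rw [hT, sub_zero] at hrem
  calc ‖f x‖ ≤ M * (x-0)^(1+1) / (Nat.factorial 1) := hrem
    _ = M * x^2 := by norm_num [Nat.factorial]

section dir
variable {H : E3 → ℂ}

lemma dir_contDiff (hH : ContDiff ℝ 3 H) (u : E3) :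
    ContDiff ℝ 3 (fun t : ℝ => H (t • u)) :=
  hH.comp ((ContinuousLinearMap.smulRight (1 : ℝ →L[ℝ] ℝ) u).contDiff)

lemma dir_iteratedDeriv_le (hH : ContDiff ℝ 3 H) {u : E3} (hu : ‖u‖ = 1) {M : ℝ}
    (k : ℕ) (hk : (k : ℕ∞) ≤ 3)
    (hM : ∀ x : E3, ‖iteratedFDeriv ℝ k H x‖ ≤ M) (t : ℝ) :
    ‖iteratedDeriv k (fun t : ℝ => H (t • u)) t‖ ≤ M := by
  have hL : ‖(ContinuousLinearMap.smulRight (1 : ℝ →L[ℝ] ℝ) u)‖ = 1 := by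
    simp [ContinuousLinearMap.norm_smulRight_apply, hu]
  have hcomp := (ContinuousLinearMap.smulRight (1 : ℝ →L[ℝ] ℝ) u).iteratedFDeriv_comp_right
    hH t (i := k) (by exact_mod_cast hk)
  have hfun : (fun t : ℝ => H (t • u)) = H ∘ (ContinuousLinearMap.smulRight (1 : ℝ →L[ℝ] ℝ) u) := by
    funext t; simp
  have hMnn : 0 ≤ M := le_trans (norm_nonneg _) (hM 0)
  rw [← norm_iteratedFDeriv_eq_norm_iteratedDeriv, hfun, hcomp]
  calc ‖(iteratedFDeriv ℝ k H ((ContinuousLinearMap.smulRight (1 : ℝ →L[ℝ] ℝ) u) t)).compContinuousLinearMap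
        (fun _ => (ContinuousLinearMap.smulRight (1 : ℝ →L[ℝ] ℝ) u))‖
      ≤ ‖iteratedFDeriv ℝ k H ((ContinuousLinearMap.smulRight (1 : ℝ →L[ℝ] ℝ) u) t)‖ *
        ∏ _i : Fin k, ‖(ContinuousLinearMap.smulRight (1 : ℝ →L[ℝ] ℝ) u)‖ :=
        ContinuousMultilinearMap.norm_compContinuousLinearMap_le _ _
    _ ≤ M := by rw [hL]; simp [hM]

lemma dir_deriv_zero (hH : ContDiff ℝ 3 H) (h1 : fderiv ℝ H 0 = 0) (u : E3) :
    deriv (fun t : ℝ => H (t • u)) 0 = 0 := by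
  have hd : HasDerivAt (fun t : ℝ => t • u) u 0 := by
    simpa using (hasDerivAt_id (0:ℝ)).smul_const u
  have hH0 : HasFDerivAt H (0 : E3 →L[ℝ] ℂ) ((0:ℝ) • u) := by
    rw [zero_smul]
    exact h1 ▸ (hH.differentiable (by norm_num)).differentiableAt.hasFDerivAt
  simpa [Function.comp_def] using (hH0.comp_hasDerivAt 0 hd).deriv

end dir


lemma arith_hc {D M a X nc : ℝ} (ha : 0 < a) (hX : 9/10*D*a^2 < X)
    (h : X - M*a^3/2 ≤ (a^2/2)*nc) : 9/10*D - M*a/2 ≤ nc/2 := by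
  have ha2 : 0 < a^2 := by positivity
  nlinarith

lemma arith_case1 {D r a ξ X : ℝ} (hD : 0 < D) (hr : 0 < r) (hra : r ≤ a)
    (hX : 9/10*D*a^2 ≤ X) :
    (11/15)*D*(r^2/(r^2+ξ^2)) ≤ X/(a^2+ξ^2) := by
  have ha : 0 < a := lt_of_lt_of_le hr hra
  have hratio : r^2/(r^2+ξ^2) ≤ a^2/(a^2+ξ^2) := by
    rw [div_le_div_iff₀ (by positivity) (by positivity)]
    have h2 : r^2 ≤ a^2 := by nlinarith
    nlinarith [mul_le_mul_of_nonneg_right h2 (sq_nonneg ξ)]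
  have h1' : (11/15)*D*(r^2/(r^2+ξ^2)) ≤ (9/10)*D*(a^2/(a^2+ξ^2)) :=
    mul_le_mul (by linarith) hratio (by positivity) (by positivity)
  refine le_trans h1' ?_
  rw [mul_div_assoc']
  exact div_le_div_of_nonneg_right (by nlinarith) (by positivity)

lemma arith_case2 {D M r a ξ nc Gr : ℝ} (hD : 0 < D) (hr : 0 < r) (ha : 0 < a)
    (har : a < r) (hM : 0 < M) (hMr : 6*M*r = D) (hnc : 0 ≤ nc)
    (hc : 9/10*D - M*a/2 ≤ nc/2) (htayr : (r^2/2)*nc - M*r^3/2 ≤ Gr) :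
    (11/15)*D*(r^2/(r^2+ξ^2)) ≤ Gr/(r^2+ξ^2) := by
  rw [mul_div_assoc']
  apply div_le_div_of_nonneg_right ?_ (by positivity)
  have hMa : M*a ≤ M*r := by nlinarith
  have h1 : (9/10*D - M*a/2)*r^2 ≤ (nc/2)*r^2 :=
    mul_le_mul_of_nonneg_right hc (sq_nonneg r)
  have h2 : (M*a)*r^2 ≤ (M*r)*r^2 := mul_le_mul_of_nonneg_right hMa (sq_nonneg r)
  have h6 : 6*(M*r*r^2) = D*r^2 := by rw [← hMr]; ring
  nlinarith [h1, h2, h6]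

lemma arith_final {D M r ξ : ℝ} (hD : 0 < D) (hM : 0 < M) (hr : 0 < r)
    (hMr : 6*M*r = D) :
    1/57*D^3/(D^2+M^2*ξ^2) ≤ 11/15*D*(r^2/(r^2+ξ^2)) := by
  have hP : (0:ℝ) < D^2 + M^2*ξ^2 := by positivity
  have hQ : (0:ℝ) < r^2 + ξ^2 := by positivity
  obtain rfl : D = 6*M*r := hMr.symm
  rw [mul_div_assoc', div_le_div_iff₀ hP hQ]
  nlinarith [mul_nonneg (mul_nonneg (mul_pos hM (mul_pos hM hM)).le
      (mul_pos hr (mul_pos hr hr)).le) (sq_nonneg ξ),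
    mul_pos (mul_pos hM (mul_pos hM hM)) (mul_pos (mul_pos hr (mul_pos hr hr)) (mul_pos hr hr))]

theorem D1_lower_bound (H : E3 → ℂ) (hH : ContDiff ℝ 3 H)
    (h0 : H 0 = 0) (h1 : fderiv ℝ H 0 = 0)
    (hb : BddAbove (Set.range fun t : Fin 4 × E3 => ‖iteratedFDeriv ℝ (t.1 : ℕ) H t.2‖))
    (ξ : ℝ) :
    D1 H ξ ≥ (1 / 57) * (D1 H 0) ^ 3 / ((D1 H 0) ^ 2 + (norm3 H) ^ 2 * ξ ^ 2) := by
  classical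
  obtain ⟨v, hv⟩ := exists_ne (0 : E3)
  haveI : Nonempty {η : E3 // η ≠ 0} := ⟨⟨v, hv⟩⟩
  set M := norm3 H with hMdef
  have key : ∀ (k : Fin 4) (x : E3), ‖iteratedFDeriv ℝ (k : ℕ) H x‖ ≤ M := by
    intro k x
    rw [hMdef]; simp only [norm3]
    exact le_ciSup hb (k, x)
  have key3 : ∀ x : E3, ‖iteratedFDeriv ℝ 3 H x‖ ≤ M := fun x => key ⟨3, by norm_num⟩ x
  have key2 : ∀ x : E3, ‖iteratedFDeriv ℝ 2 H x‖ ≤ M := fun x => key ⟨2, by norm_num⟩ x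
  have hM0 : 0 ≤ M := le_trans (norm_nonneg _) (key ⟨0, by norm_num⟩ 0)
  -- quadratic bound
  have hquad : ∀ η : E3, ‖H η‖ ≤ M * ‖η‖^2 := by
    intro η
    rcases eq_or_ne η 0 with rfl | hη
    · simp [h0]
    · have ha : (0:ℝ) < ‖η‖ := norm_pos_iff.2 hη
      set u : E3 := ‖η‖⁻¹ • η with hu
      have hu1 : ‖u‖ = 1 := by
        rw [hu, norm_smul, norm_inv, norm_norm, inv_mul_cancel₀ ha.ne']
      have hg3 : ContDiff ℝ 3 (fun t : ℝ => H (t • u)) := dir_contDiff hH u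
      have hg0 : (fun t : ℝ => H (t • u)) 0 = 0 := by simp [h0]
      have hg1 : deriv (fun t : ℝ => H (t • u)) 0 = 0 := dir_deriv_zero hH h1 u
      have hkey := dir_iteratedDeriv_le hH hu1 2 (by norm_num) key2
      have := taylor1_bound hg3 hg0 hg1 ha hkey ‖η‖ ⟨ha.le, le_rfl⟩
      rwa [show ‖η‖ • u = η by rw [hu, smul_smul, mul_inv_cancel₀ ha.ne', one_smul]] at this
  -- boundedness of the families
  have hbddξ : ∀ ζ : ℝ, BddAbove (Set.range fun η : {η : E3 // η ≠ 0} =>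
      ‖H (η : E3)‖ / (‖(η : E3)‖ ^ 2 + ζ ^ 2)) := by
    intro ζ
    refine ⟨M, ?_⟩
    rintro x ⟨η, rfl⟩
    have hp : (0:ℝ) < ‖(η:E3)‖^2 := pow_pos (norm_pos_iff.2 η.2) 2
    calc ‖H (η:E3)‖ / (‖(η:E3)‖^2 + ζ^2) ≤ ‖H (η:E3)‖ / ‖(η:E3)‖^2 :=
          div_le_div_of_nonneg_left (norm_nonneg _) hp (by nlinarith [sq_nonneg ζ])
      _ ≤ M := (div_le_iff₀ hp).2 (by nlinarith [hquad (η:E3)])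
  have hD1ξ_ge : ∀ η : {η : E3 // η ≠ 0},
      ‖H (η : E3)‖ / (‖(η : E3)‖ ^ 2 + ξ ^ 2) ≤ D1 H ξ := by
    intro η
    simp only [D1]
    exact le_ciSup (hbddξ ξ) η
  have hD1ξ_nonneg : 0 ≤ D1 H ξ := by
    refine le_trans ?_ (hD1ξ_ge ⟨v, hv⟩)
    positivity
  set D := D1 H 0 with hDdef
  have hD0nonneg : 0 ≤ D := by
    have hle : ‖H v‖ / (‖v‖ ^ 2 + (0:ℝ) ^ 2) ≤ D := by
      rw [hDdef]; simp only [D1]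
      exact le_ciSup (hbddξ 0) ⟨v, hv⟩
    refine le_trans ?_ hle
    positivity
  clear_value M
  rcases eq_or_lt_of_le hD0nonneg with hD0 | hD0
  · rw [← hD0]
    simpa using hD1ξ_nonneg
  · -- main case: 0 < D
    have hlt : D - D/10 < D := by linarith
    rw [hDdef] at hlt
    conv at hlt => rw [D1]
    obtain ⟨η₀, hη₀⟩ := exists_lt_of_lt_ciSup hlt
    have h9 : D - D/10 < ‖H (η₀ : E3)‖ / (‖(η₀ : E3)‖ ^ 2 + (0:ℝ) ^ 2) := hη₀
    clear_value D
    clear hlt hη₀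
    set a := ‖(η₀ : E3)‖ with hadef
    have ha : 0 < a := norm_pos_iff.2 η₀.2
    have ha2 : 0 < a^2 := pow_pos ha 2
    have h9' : 9/10*D < ‖H (η₀:E3)‖ / a^2 := by
      have hz : a ^ 2 + (0:ℝ)^2 = a^2 := by norm_num
      rw [hz] at h9; linarith
    have hη₀' : 9/10*D * a^2 < ‖H (η₀:E3)‖ := (lt_div_iff₀ ha2).1 h9'
    have hH₀pos : 0 < ‖H (η₀:E3)‖ := by nlinarith
    have hMpos : 0 < M := by nlinarith [hquad (η₀:E3)]
    set u : E3 := a⁻¹ • (η₀:E3) with hu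
    have hu1 : ‖u‖ = 1 := by
      rw [hu, norm_smul, norm_inv, norm_norm, ← hadef, inv_mul_cancel₀ ha.ne']
    set g : ℝ → ℂ := fun t => H (t • u) with hgdef
    have hg3 : ContDiff ℝ 3 g := dir_contDiff hH u
    have hg0 : g 0 = 0 := by simp [hgdef, h0]
    have hg1 : deriv g 0 = 0 := dir_deriv_zero hH h1 u
    have hgkey : ∀ t : ℝ, ‖iteratedDeriv 3 g t‖ ≤ M :=
      dir_iteratedDeriv_le hH hu1 3 (by norm_num) key3
    have hga : g a = H (η₀:E3) := by
      rw [hgdef]; simp only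
      rw [hu, smul_smul, mul_inv_cancel₀ ha.ne', one_smul]
    set r : ℝ := D/(6*M) with hrdef
    have hr : 0 < r := by rw [hrdef]; positivity
    have hMr : 6 * M * r = D := by
      rw [hrdef]; field_simp
    have hbpos : 0 < max a r := lt_of_lt_of_le ha (le_max_left _ _)
    have htaya := taylor2_bound hg3 hg0 hg1 hbpos hgkey a ⟨ha.le, le_max_left _ _⟩
    have htayr := taylor2_bound hg3 hg0 hg1 hbpos hgkey r ⟨hr.le, le_max_right _ _⟩
    set c := iteratedDeriv 2 g 0 with hcdef
    have hcnn : 0 ≤ ‖c‖ := norm_nonneg c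
    have hgr_eq : g r = H (r • u) := rfl
    have hgru : ‖H (r • u)‖ = ‖g r‖ := by rw [hgr_eq]
    have hru : (r • u) ≠ 0 := by
      intro h
      have h' : ‖r • u‖ = 0 := by rw [h, norm_zero]
      rw [norm_smul, hu1, mul_one, Real.norm_eq_abs, abs_of_pos hr] at h'
      exact hr.ne' h'
    have hnr : ‖r • u‖ = r := by
      rw [norm_smul, hu1, mul_one, Real.norm_eq_abs, abs_of_pos hr]
    have hDr := hD1ξ_ge ⟨r • u, hru⟩
    simp only [hnr] at hDr
    have hDa := hD1ξ_ge η₀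
    rw [← hadef] at hDa
    -- make everything opaque
    have hga' : ‖g a‖ = ‖H (η₀:E3)‖ := by rw [hga]
    set X := ‖H (η₀:E3)‖ with hX
    set Ga := ‖g a‖ with hGa
    set Gr := ‖g r‖ with hGr
    rw [hgru] at hDr
    clear_value c r u a X Ga Gr
    clear hgr_eq hgru hga h9 h9' hgdef hu hX hadef
    -- Taylor consequences
    have htaya' : Ga - M*a^3/2 ≤ (a^2/2) * ‖c‖ := by
      have h3' := norm_sub_norm_le (g a) ((a^2/2 : ℝ) • c)
      rw [norm_smul, Real.norm_eq_abs, abs_of_nonneg (by positivity : (0:ℝ) ≤ a^2/2)] at h3'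
      rw [← hGa] at h3'
      linarith
    have htayr' : (r^2/2) * ‖c‖ - M*r^3/2 ≤ Gr := by
      have h3' := norm_sub_norm_le ((r^2/2 : ℝ) • c) (g r)
      rw [norm_sub_rev] at htayr
      rw [norm_smul, Real.norm_eq_abs, abs_of_nonneg (by positivity : (0:ℝ) ≤ r^2/2)] at h3'
      rw [← hGr] at h3'
      linarith
    have hc : 9/10*D - M*a/2 ≤ ‖c‖/2 := by
      rw [hga'] at htaya'
      exact arith_hc ha (hη₀') htaya'
    have hcommon : (11/15)*D * (r^2/(r^2+ξ^2)) ≤ D1 H ξ := by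
      rcases le_or_gt r a with hcase | hcase
      · exact le_trans (arith_case1 hD0 hr hcase (hη₀').le) hDa
      · exact le_trans (arith_case2 hD0 hr ha hcase hMpos hMr hcnn hc htayr') hDr
    exact le_trans (arith_final hD0 hMpos hr hMr) hcommon
end
end

section
/- Let H : ℝ³ × ℝᵖ → ℂ be C^{3,1} with H(0,0) = 0, ∇_η H(0,ξ) existing, H(0,ξ) = 0 for all ξ, and ‖H‖_{3,0} := sup_ξ ‖H(·,ξ)‖₃ < ∞. Suppose moreover D₁(H,ξ) ≤ ‖H‖_{3,0}/2, where D₁(H,ξ) = sup_{η≠0} |H(η,ξ)|/(‖η‖² + ‖ξ‖²). Define α(ξ) = ‖∇_η H(0,ξ)‖/(‖ξ‖ √(1 + ‖ξ‖²)). Then α(ξ)² ≤ 8 ‖H‖_{3,0} D₁(H,ξ). -/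
noncomputable section
open scoped BigOperators

variable {p : ℕ}

/-- `‖H‖_{3,0}`: supremum over `ξ` of the `C³`-norm of the slice `H(·, ξ)`. -/
def norm30 (H : E3 → EuclideanSpace ℝ (Fin p) → ℂ) : ℝ :=
  ⨆ t : EuclideanSpace ℝ (Fin p) × Fin 4 × E3,
    ‖iteratedFDeriv ℝ (t.2.1 : ℕ) (fun η => H η t.1) t.2.2‖

/-- `D₁(H, ξ)` for the two-variable function. -/
def D1p (H : E3 → EuclideanSpace ℝ (Fin p) → ℂ) (ξ : EuclideanSpace ℝ (Fin p)) : ℝ :=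
  ⨆ η : {η : E3 // η ≠ 0}, ‖H (η : E3) ξ‖ / (‖(η : E3)‖ ^ 2 + ‖ξ‖ ^ 2)

/-- `α(ξ) = ‖∇_η H(0, ξ)‖ / (‖ξ‖ √(1 + ‖ξ‖²))`. -/
def alpha (H : E3 → EuclideanSpace ℝ (Fin p) → ℂ) (ξ : EuclideanSpace ℝ (Fin p)) : ℝ :=
  ‖fderiv ℝ (fun η => H η ξ) 0‖ / (‖ξ‖ * Real.sqrt (1 + ‖ξ‖ ^ 2))

private lemma arith1 (L N a s : ℝ) (hL : 0 ≤ L) (hN : 0 ≤ N) (ha : 0 < a) (hs : 0 < s) :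
    L * a + N * a ^ 2 ≤ (N + L / (2 * s)) * (a ^ 2 + s ^ 2) := by
  have hc0 : 0 ≤ L / (2 * s) := by positivity
  have hcL : L = L / (2 * s) * (2 * s) := by field_simp
  nlinarith [mul_nonneg hc0 (sq_nonneg (a - s)), mul_nonneg hN (sq_nonneg s)]

private lemma arith2 (L N D s : ℝ) (hL : 0 < L) (hN : 0 < N) (hD0 : 0 ≤ D) (hDN : D ≤ N / 2)
    (h : ∀ ε : ℝ, 0 < ε → ε ≤ L / 2 →
      L / (2 * N) * (L - ε) - N * (L / (2 * N)) ^ 2 ≤ D * ((L / (2 * N)) ^ 2 + s ^ 2)) :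
    L ^ 2 ≤ 8 * N * D * s ^ 2 := by
  have ht : 0 < L / (2 * N) := div_pos hL (by linarith)
  have key : L ^ 2 / (8 * N) ≤ D * s ^ 2 := by
    refine le_of_forall_pos_le_add ?_
    intro δ hδ
    have h2Nδ : 0 < 2 * N * δ := by positivity
    have hεp : 0 < min (2 * N * δ / L) (L / 2) := lt_min (div_pos h2Nδ hL) (half_pos hL)
    set ε : ℝ := min (2 * N * δ / L) (L / 2) with hε
    have h1 := h ε hεp (min_le_right _ _)
    have hDt : D * (L / (2 * N)) ^ 2 ≤ N / 2 * (L / (2 * N)) ^ 2 := by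
      nlinarith [sq_nonneg (L / (2 * N))]
    have htε : L / (2 * N) * ε ≤ δ := by
      have h2 : ε ≤ 2 * N * δ / L := min_le_left _ _
      have h3 : L / (2 * N) * (2 * N * δ / L) = δ := by
        field_simp
      calc L / (2 * N) * ε ≤ L / (2 * N) * (2 * N * δ / L) :=
            mul_le_mul_of_nonneg_left h2 ht.le
        _ = δ := h3
    have hexp : L / (2 * N) * L - N * (L / (2 * N)) ^ 2 - N / 2 * (L / (2 * N)) ^ 2
        = L ^ 2 / (8 * N) := by
      field_simp
      ring
    have hsp : L / (2 * N) * (L - ε) = L / (2 * N) * L - L / (2 * N) * ε := by ring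
    have hDadd : D * ((L / (2 * N)) ^ 2 + s ^ 2) = D * (L / (2 * N)) ^ 2 + D * s ^ 2 := by ring
    linarith
  rw [div_le_iff₀ (by positivity : (0:ℝ) < 8 * N)] at key
  linarith

private lemma arith3 (X s : ℝ) (hX : 0 ≤ X) : X * s ^ 2 ≤ X * (s ^ 2 * (1 + s ^ 2)) := by
  nlinarith [mul_nonneg (mul_nonneg hX (sq_nonneg s)) (sq_nonneg s)]

theorem alpha_sq_bound (H : E3 → EuclideanSpace ℝ (Fin p) → ℂ)
    (hH : ∀ ξ, ContDiff ℝ 3 (fun η => H η ξ))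
    (hH2 : ∀ η, ContDiff ℝ 1 (fun ξ => H η ξ))
    (h00 : H 0 0 = 0)
    (h0ξ : ∀ ξ, H 0 ξ = 0)
    (hb : BddAbove (Set.range fun t : EuclideanSpace ℝ (Fin p) × Fin 4 × E3 =>
      ‖iteratedFDeriv ℝ (t.2.1 : ℕ) (fun η => H η t.1) t.2.2‖))
    (ξ : EuclideanSpace ℝ (Fin p))
    (hD : D1p H ξ ≤ norm30 H / 2) :
    (alpha H ξ) ^ 2 ≤ 8 * norm30 H * D1p H ξ := by
  classical
  set f : E3 → ℂ := fun η => H η ξ with hfdef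
  set φ : E3 →L[ℝ] ℂ := fderiv ℝ f 0 with hφdef
  obtain ⟨N, hNdef⟩ : ∃ N : ℝ, norm30 H = N := ⟨_, rfl⟩
  obtain ⟨D, hDdef⟩ : ∃ D : ℝ, D1p H ξ = D := ⟨_, rfl⟩
  obtain ⟨L, hLdef⟩ : ∃ L : ℝ, ‖φ‖ = L := ⟨_, rfl⟩
  rw [hNdef, hDdef] at hD ⊢
  have hN0 : 0 ≤ N := hNdef ▸ Real.iSup_nonneg fun t => norm_nonneg _
  have hD0 : 0 ≤ D := hDdef ▸ Real.iSup_nonneg fun η =>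
    div_nonneg (norm_nonneg _) (by positivity)
  have h8ND : 0 ≤ 8 * N * D := by positivity
  have hnorm1 : ∀ (g : E3 → ℂ) (x : E3), ‖fderiv ℝ g x‖ = ‖iteratedFDeriv ℝ 1 g x‖ := by
    intro g x
    rw [← norm_iteratedFDeriv_fderiv, norm_iteratedFDeriv_zero]
  have hle : ∀ (k : Fin 4) (x : E3), ‖iteratedFDeriv ℝ (k : ℕ) f x‖ ≤ N :=
    fun k x => hNdef ▸ le_ciSup hb (ξ, k, x)
  have hLN : L ≤ N := by
    have h := hle 1 0
    rw [show ((1 : Fin 4) : ℕ) = 1 from rfl] at h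
    rw [← hLdef, hnorm1]
    exact h
  have halpha : alpha H ξ = L / (‖ξ‖ * Real.sqrt (1 + ‖ξ‖ ^ 2)) := by
    rw [alpha, ← hfdef, ← hφdef, hLdef]
  rcases eq_or_ne ξ 0 with hξ0 | hξ0
  · rw [halpha, hξ0]
    simp [h8ND]
  rcases eq_or_lt_of_le (norm_nonneg φ) with hL0 | hL0
  · have hLz : L = 0 := by rw [← hLdef, ← hL0]
    rw [halpha, hLz]
    simpa using h8ND
  have hLpos : 0 < L := hLdef ▸ hL0
  have hNpos : 0 < N := lt_of_lt_of_le hLpos hLN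
  have hξpos : 0 < ‖ξ‖ := norm_pos_iff.mpr hξ0
  -- differentiability facts
  have hf3 : ContDiff ℝ 3 f := hH ξ
  have hfdiff : Differentiable ℝ f := hf3.differentiable (by norm_num)
  have hf'cd : ContDiff ℝ 1 (fderiv ℝ f) := hf3.fderiv_right (by norm_num)
  have hf'diff : Differentiable ℝ (fderiv ℝ f) := hf'cd.differentiable (by norm_num)
  -- bound on second derivative
  have hfd2 : ∀ x : E3, ‖fderiv ℝ (fderiv ℝ f) x‖ ≤ N := by
    intro x
    have h := hle 2 x
    rw [show ((2 : Fin 4) : ℕ) = 2 from rfl] at h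
    calc ‖fderiv ℝ (fderiv ℝ f) x‖
        = ‖iteratedFDeriv ℝ 0 (fderiv ℝ (fderiv ℝ f)) x‖ := (norm_iteratedFDeriv_zero (f := fderiv ℝ (fderiv ℝ f)) (x := x)).symm
      _ = ‖iteratedFDeriv ℝ 1 (fderiv ℝ f) x‖ := norm_iteratedFDeriv_fderiv
      _ = ‖iteratedFDeriv ℝ 2 f x‖ := norm_iteratedFDeriv_fderiv
      _ ≤ N := h
  -- Lipschitz bound on the gradient
  have hLip : ∀ x : E3, ‖fderiv ℝ f x - φ‖ ≤ N * ‖x‖ := by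
    intro x
    have h := Convex.norm_image_sub_le_of_norm_fderiv_le
      (fun y (_ : y ∈ (Set.univ : Set E3)) => hf'diff y)
      (fun y _ => hfd2 y) convex_univ (Set.mem_univ (0 : E3)) (Set.mem_univ x)
    simpa using h
  have hf0 : f 0 = 0 := h0ξ ξ
  -- Taylor bound
  have hTay : ∀ η : E3, ‖f η - φ η‖ ≤ N * ‖η‖ ^ 2 := by
    intro η
    set g : E3 → ℂ := fun x => f x - φ x with hgdef
    have hgdiff : ∀ x : E3, DifferentiableAt ℝ g x :=
      fun x => (hfdiff x).sub (φ.differentiableAt)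
    have hgderiv : ∀ x : E3, fderiv ℝ g x = fderiv ℝ f x - φ := by
      intro x
      rw [hgdef, fderiv_fun_sub (hfdiff x) φ.differentiableAt, ContinuousLinearMap.fderiv]
    have hbd : ∀ x ∈ Metric.closedBall (0 : E3) ‖η‖, ‖fderiv ℝ g x‖ ≤ N * ‖η‖ := by
      intro x hx
      rw [hgderiv x]
      refine (hLip x).trans (mul_le_mul_of_nonneg_left ?_ hN0)
      simpa [dist_eq_norm] using Metric.mem_closedBall.mp hx
    have hmem : η ∈ Metric.closedBall (0 : E3) ‖η‖ := by
      rw [Metric.mem_closedBall, dist_eq_norm, sub_zero]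
    have h := Convex.norm_image_sub_le_of_norm_fderiv_le
      (fun x _ => hgdiff x) hbd (convex_closedBall (0 : E3) ‖η‖)
      (Metric.mem_closedBall_self (norm_nonneg η)) hmem
    have hg0 : g 0 = 0 := by simp [hgdef, hf0]
    rw [hg0, sub_zero, sub_zero] at h
    calc ‖f η - φ η‖ = ‖g η‖ := rfl
      _ ≤ N * ‖η‖ * ‖η‖ := h
      _ = N * ‖η‖ ^ 2 := by ring
  have hlow : ∀ η : E3, ‖φ η‖ ≤ ‖f η‖ + N * ‖η‖ ^ 2 := by
    intro η
    have h := norm_sub_le (f η) (f η - φ η)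
    simp only [sub_sub_cancel] at h
    linarith [hTay η]
  have hup : ∀ η : E3, ‖f η‖ ≤ L * ‖η‖ + N * ‖η‖ ^ 2 := by
    intro η
    have h3 : ‖f η‖ ≤ ‖f η - φ η‖ + ‖φ η‖ := by
      simpa using norm_add_le (f η - φ η) (φ η)
    have h5 : ‖φ η‖ ≤ L * ‖η‖ := hLdef ▸ φ.le_opNorm η
    linarith [hTay η]
  -- BddAbove for D
  have hbD : BddAbove (Set.range fun η : {η : E3 // η ≠ 0} =>
      ‖H (η : E3) ξ‖ / (‖(η : E3)‖ ^ 2 + ‖ξ‖ ^ 2)) := by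
    refine ⟨N + L / (2 * ‖ξ‖), ?_⟩
    rintro r ⟨η, rfl⟩
    have hηpos : 0 < ‖(η : E3)‖ := norm_pos_iff.mpr η.2
    have hden : 0 < ‖(η : E3)‖ ^ 2 + ‖ξ‖ ^ 2 := by positivity
    rw [div_le_iff₀ hden]
    have h1 : ‖H (η : E3) ξ‖ ≤ L * ‖(η : E3)‖ + N * ‖(η : E3)‖ ^ 2 := hup (η : E3)
    exact h1.trans (arith1 L N ‖(η : E3)‖ ‖ξ‖ hLpos.le hN0 hηpos hξpos)
  have hDle : ∀ η : E3, η ≠ 0 → ‖f η‖ ≤ D * (‖η‖ ^ 2 + ‖ξ‖ ^ 2) := by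
    intro η hη
    have h : ‖H η ξ‖ / (‖η‖ ^ 2 + ‖ξ‖ ^ 2) ≤ D := by
      rw [← hDdef]
      exact le_ciSup hbD ⟨η, hη⟩
    have hden : 0 < ‖η‖ ^ 2 + ‖ξ‖ ^ 2 := by positivity
    rw [div_le_iff₀ hden] at h
    calc ‖f η‖ = ‖H η ξ‖ := rfl
      _ ≤ D * (‖η‖ ^ 2 + ‖ξ‖ ^ 2) := h
  have hφnorm : ∀ ε : ℝ, 0 < ε → ∃ x : E3, ‖x‖ < 1 ∧ L - ε < ‖φ x‖ := by
    intro ε hε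
    exact φ.exists_lt_apply_of_lt_opNorm (show L - ε < ‖φ‖ by rw [hLdef]; linarith)
  clear_value φ f
  -- the key step: evaluate at a well-chosen η
  have hstep : ∀ ε : ℝ, 0 < ε → ε ≤ L / 2 →
      L / (2 * N) * (L - ε) - N * (L / (2 * N)) ^ 2
        ≤ D * ((L / (2 * N)) ^ 2 + ‖ξ‖ ^ 2) := by
    intro ε hε hεL
    obtain ⟨x, hx1, hx2⟩ := hφnorm ε hε
    obtain ⟨t, htdef⟩ : ∃ t : ℝ, L / (2 * N) = t := ⟨_, rfl⟩
    rw [htdef]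
    have ht : 0 < t := htdef ▸ div_pos hLpos (by linarith)
    have hφη : t * (L - ε) ≤ ‖φ (t • x)‖ := by
      rw [map_smul, norm_smul, Real.norm_eq_abs, abs_of_pos ht]
      exact mul_le_mul_of_nonneg_left hx2.le ht.le
    have hη0 : t • x ≠ (0 : E3) := by
      intro h
      rw [h, map_zero, norm_zero] at hφη
      have h2 : 0 < t * (L - ε) := mul_pos ht (by linarith)
      linarith
    have hηt : ‖t • x‖ ≤ t := by
      rw [norm_smul, Real.norm_eq_abs, abs_of_pos ht]
      calc t * ‖x‖ ≤ t * 1 := mul_le_mul_of_nonneg_left hx1.le ht.le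
        _ = t := mul_one t
    have hsq : ‖t • x‖ ^ 2 ≤ t ^ 2 := pow_le_pow_left₀ (norm_nonneg _) hηt 2
    have hlb : t * (L - ε) - N * t ^ 2 ≤ ‖f (t • x)‖ := by
      have h1 := hlow (t • x)
      have h2 : N * ‖t • x‖ ^ 2 ≤ N * t ^ 2 := mul_le_mul_of_nonneg_left hsq hN0
      linarith
    have hub : ‖f (t • x)‖ ≤ D * (t ^ 2 + ‖ξ‖ ^ 2) := by
      have h1 := hDle (t • x) hη0
      have h2 : D * (‖t • x‖ ^ 2 + ‖ξ‖ ^ 2) ≤ D * (t ^ 2 + ‖ξ‖ ^ 2) := by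
        apply mul_le_mul_of_nonneg_left _ hD0
        linarith
      linarith
    linarith
  have hL2 : L ^ 2 ≤ 8 * N * D * ‖ξ‖ ^ 2 := arith2 L N D ‖ξ‖ hLpos hNpos hD0 hD hstep
  -- conclusion
  have hs : Real.sqrt (1 + ‖ξ‖ ^ 2) ^ 2 = 1 + ‖ξ‖ ^ 2 := Real.sq_sqrt (by positivity)
  have hspos : (0:ℝ) < Real.sqrt (1 + ‖ξ‖ ^ 2) := Real.sqrt_pos.mpr (by positivity)
  have hden : (0:ℝ) < (‖ξ‖ * Real.sqrt (1 + ‖ξ‖ ^ 2)) ^ 2 := by positivity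
  rw [halpha, div_pow, div_le_iff₀ hden, mul_pow, hs]
  have h3 := arith3 (8 * N * D) ‖ξ‖ h8ND
  linarith
end
end

section
/- Let f, g be probability distributions on ℝ⁶ with equal (zero) first moments and finite second moments, and let R be the Kac collision operator R[f](v₁,v₂) = ∫_{S²} f(v₁ − ((v₁−v₂)·ω)ω, v₂ − ((v₂−v₁)·ω)ω) dω with dω the normalized measure on S². Then d₂(R[f], R[g]) ≤ d₂(f, g), where d₂(f,g) = sup_{ξ≠0} |f̂(ξ) − ĝ(ξ)|/‖ξ‖² is the Gabetta–Toscani–Wennberg distance. -/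
noncomputable section
open MeasureTheory

/-- `ℝ⁶` viewed as two `ℝ³` blocks. -/
abbrev V6 := EuclideanSpace ℝ (Fin 2 × Fin 3)

def sphereMeasure : Measure (Metric.sphere (0 : E3) 1) :=
  (volume : Measure E3).toSphere

def blk (v : V6) (i : Fin 2) : E3 := WithLp.toLp 2 (fun j => v (i, j))

/-- post-collisional velocity pair given direction `ω`. -/
def collide (v : V6) (ω : E3) : V6 := WithLp.toLp 2 fun p : Fin 2 × Fin 3 =>
  if p.1 = 0 then (blk v 0 - (inner ℝ (blk v 0 - blk v 1) ω : ℝ) • ω) p.2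
  else (blk v 1 - (inner ℝ (blk v 1 - blk v 0) ω : ℝ) • ω) p.2

/-- The Kac collision operator `R` on distributions on `ℝ⁶`
(average over the normalized uniform measure on `S²`). -/
def Rop (f : V6 → ℝ) (v : V6) : ℝ :=
  ⨍ ω : Metric.sphere (0 : E3) 1, f (collide v (ω : E3)) ∂sphereMeasure

/-- The GTW distance `d₂`. -/
def d2 (f g : V6 → ℝ) : ℝ :=
  ⨆ ξ : {ξ : V6 // ξ ≠ 0},
    ‖(FourierTransform.fourier (fun v : V6 => (f v : ℂ)) : V6 → ℂ) (ξ : V6) -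
      (FourierTransform.fourier (fun v : V6 => (g v : ℂ)) : V6 → ℂ) (ξ : V6)‖ / ‖(ξ : V6)‖ ^ 2

open Real Complex
open scoped RealInnerProductSpace FourierTransform

def uvecL : E3 →ₗ[ℝ] V6 where
  toFun ω := WithLp.toLp 2 fun p : Fin 2 × Fin 3 => if p.1 = 0 then ω p.2 else -ω p.2
  map_add' x y := by
    ext p
    by_cases h : p.1 = 0 <;> simp [h, PiLp.add_apply] <;> ring
  map_smul' c x := by
    ext p
    by_cases h : p.1 = 0 <;> simp [h, PiLp.smul_apply, smul_eq_mul] <;> ring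

lemma inner_uvecL (v : V6) (ω : E3) :
    ⟪v, uvecL ω⟫ = ⟪blk v 0 - blk v 1, ω⟫ := by
  simp only [PiLp.inner_apply, RCLike.inner_apply, conj_trivial, uvecL, blk,
    LinearMap.coe_mk, AddHom.coe_mk, PiLp.sub_apply, Fintype.sum_prod_type,
    Fin.sum_univ_two, sub_mul]
  simp [Finset.sum_sub_distrib]
  rw [← sub_eq_add_neg, ← Finset.sum_sub_distrib]; exact Finset.sum_congr rfl fun x _ => by ring

lemma collide_eq (v : V6) (ω : E3) :
    collide v ω = v - (⟪v, uvecL ω⟫) • uvecL ω := by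
  ext ⟨i, j⟩
  rw [inner_uvecL]
  fin_cases i <;>
    simp [collide, uvecL, blk, PiLp.sub_apply, PiLp.smul_apply, smul_eq_mul,
      inner_sub_left] <;> ring

lemma inner_uvecL_self {ω : E3} (hω : ‖ω‖ = 1) : ⟪uvecL ω, uvecL ω⟫ = 2 := by
  rw [inner_uvecL]
  have h0 : blk (uvecL ω) 0 = ω := by ext j; simp [blk, uvecL]
  have h1 : blk (uvecL ω) 1 = -ω := by ext j; simp [blk, uvecL]
  rw [h0, h1, sub_neg_eq_add, inner_add_left]
  have := real_inner_self_eq_norm_sq ω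
  rw [hω] at this
  rw [this]; norm_num

def collideLI (ω : E3) : V6 ≃ₗᵢ[ℝ] V6 := Submodule.reflection (ℝ ∙ uvecL ω)ᗮ

lemma collideLI_apply {ω : E3} (hω : ‖ω‖ = 1) (v : V6) :
    collideLI ω v = collide v ω := by
  rw [collide_eq, collideLI, Submodule.reflection_apply, Submodule.starProjection_orthogonal_val,
    Submodule.starProjection_singleton]
  have h2 : (‖uvecL ω‖ ^ 2 : ℝ) = 2 := by
    rw [← real_inner_self_eq_norm_sq]; exact inner_uvecL_self hω
  rw [h2, real_inner_comm (uvecL ω) v]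
  push_cast
  module

lemma collide_measurePreserving {ω : E3} (hω : ‖ω‖ = 1) :
    MeasurePreserving (fun v : V6 => collide v ω) volume volume := by
  have h : (fun v : V6 => collide v ω) = ⇑(collideLI ω) := by
    funext v; rw [collideLI_apply hω]
  rw [h]; exact (collideLI ω).measurePreserving

lemma continuous_collide : Continuous (fun z : V6 × E3 => collide z.1 z.2) := by
  have h : (fun z : V6 × E3 => collide z.1 z.2)
      = fun z => z.1 - (⟪z.1, uvecL z.2⟫) • uvecL z.2 := by
    funext z; rw [collide_eq]
  rw [h]
  have hu : Continuous (uvecL : E3 → V6) := uvecL.continuous_of_finiteDimensional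
  exact continuous_fst.sub
    (((continuous_inner (𝕜 := ℝ)).comp (continuous_fst.prodMk (hu.comp continuous_snd))).smul
      (hu.comp continuous_snd))

lemma norm_collide {ω : E3} (hω : ‖ω‖ = 1) (v : V6) : ‖collide v ω‖ = ‖v‖ := by
  rw [← collideLI_apply hω]; exact (collideLI ω).norm_map v

lemma collide_ne_zero {ω : E3} (hω : ‖ω‖ = 1) {v : V6} (hv : v ≠ 0) : collide v ω ≠ 0 := by
  intro h
  apply hv
  have := norm_collide hω v
  rw [h, norm_zero] at this
  exact norm_eq_zero.mp this.symm

lemma exp_taylor_bound (θ : ℝ) :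
    ‖Complex.exp (θ * Complex.I) - 1 - θ * Complex.I‖ ≤ 3 * θ ^ 2 := by
  rcases le_or_gt |θ| 1 with h | h
  · have h2 : ‖((θ : ℂ) * Complex.I)‖ ≤ 1 := by simpa using h
    have h3 := Complex.norm_exp_sub_one_sub_id_le h2
    have habs : ‖((θ : ℂ) * Complex.I)‖ = |θ| := by simp
    calc ‖(Complex.exp (θ * Complex.I) - 1 - θ * Complex.I)‖
        ≤ ‖((θ : ℂ) * Complex.I)‖ ^ 2 := h3
      _ = θ ^ 2 := by rw [habs]; exact _root_.sq_abs θ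
      _ ≤ 3 * θ ^ 2 := by nlinarith [sq_nonneg θ]
  · have h1 : ‖Complex.exp ((θ : ℂ) * Complex.I)‖ = 1 := by
      exact Complex.norm_exp_ofReal_mul_I θ
    have h4 : ‖(θ : ℂ) * Complex.I‖ = |θ| := by simp
    have : ‖Complex.exp (θ * Complex.I) - 1 - θ * Complex.I‖
        ≤ ‖Complex.exp ((θ:ℂ) * Complex.I)‖ + ‖(1 : ℂ)‖ + ‖(θ:ℂ) * Complex.I‖ := by
      calc ‖Complex.exp (θ * Complex.I) - 1 - θ * Complex.I‖
          ≤ ‖Complex.exp (θ * Complex.I) - 1‖ + ‖(θ:ℂ) * Complex.I‖ := norm_sub_le _ _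
        _ ≤ ‖Complex.exp ((θ:ℂ) * Complex.I)‖ + ‖(1:ℂ)‖ + ‖(θ:ℂ) * Complex.I‖ := by
            have := norm_sub_le (Complex.exp ((θ:ℂ) * Complex.I)) 1
            linarith
    rw [h1, h4, norm_one] at this
    nlinarith [_root_.sq_abs θ, abs_nonneg θ]

-- fourierChar in exp form, with negative argument
lemma fourierChar_neg_eq (t : ℝ) :
    (𝐞 (-t) : ℂ) = Complex.exp ((-(2 * π * t) : ℝ) * Complex.I) := by
  rw [Real.fourierChar_apply]
  norm_num

lemma integrable_smul_id {f : V6 → ℝ} (hf0 : ∀ v, 0 ≤ f v) (hfi : Integrable f)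
    (hf2 : Integrable fun v : V6 => ‖v‖ ^ 2 * f v) :
    Integrable (fun v : V6 => f v • v) := by
  refine Integrable.mono (hfi.add hf2)
    (hfi.aestronglyMeasurable.smul aestronglyMeasurable_id)
    (Filter.Eventually.of_forall fun v => ?_)
  simp only [Pi.add_apply]
  rw [norm_smul, Real.norm_eq_abs, _root_.abs_of_nonneg (hf0 v), Real.norm_eq_abs,
    _root_.abs_of_nonneg (add_nonneg (hf0 v) (mul_nonneg (sq_nonneg _) (hf0 v)))]
  nlinarith [hf0 v, norm_nonneg v, sq_nonneg (‖v‖ - 1), mul_nonneg (hf0 v) (sq_nonneg (‖v‖ - 1))]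

lemma fourier_diff_quadratic (f g : V6 → ℝ) (hf0 : ∀ v, 0 ≤ f v) (hg0 : ∀ v, 0 ≤ g v)
    (hfi : Integrable f) (hgi : Integrable g) (hf1 : ∫ v, f v = 1) (hg1 : ∫ v, g v = 1)
    (hfm : ∫ v : V6, f v • v = 0) (hgm : ∫ v : V6, g v • v = 0)
    (hf2 : Integrable fun v : V6 => ‖v‖ ^ 2 * f v) (hg2 : Integrable fun v : V6 => ‖v‖ ^ 2 * g v)
    (ξ : V6) :
    ‖𝓕 (fun v : V6 => (f v : ℂ)) ξ - 𝓕 (fun v : V6 => (g v : ℂ)) ξ‖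
      ≤ (12 * π ^ 2 * ((∫ v, ‖v‖ ^ 2 * f v) + ∫ v, ‖v‖ ^ 2 * g v)) * ‖ξ‖ ^ 2 := by
  set T : V6 → ℝ := fun v => -(2 * π * ⟪v, ξ⟫) with hT
  have hfv : Integrable (fun v : V6 => f v • v) := integrable_smul_id hf0 hfi hf2
  have hgv : Integrable (fun v : V6 => g v • v) := integrable_smul_id hg0 hgi hg2
  have hhv : Integrable (fun v : V6 => (f v - g v) • v) := by
    refine (hfv.sub hgv).congr (Filter.Eventually.of_forall fun v => ?_)
    show f v • v - g v • v = (f v - g v) • v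
    rw [sub_smul]
  have hh1 : ∫ v, (f v - g v) = 0 := by rw [integral_sub hfi hgi, hf1, hg1, sub_self]
  have hhm : ∫ v : V6, (f v - g v) • v = 0 := by
    simp_rw [sub_smul]; rw [integral_sub hfv hgv, hfm, hgm, sub_self]
  have hptw : ∀ v : V6, ⟪v, ξ⟫ * (f v - g v) = ⟪ξ, (f v - g v) • v⟫ := fun v => by
    rw [real_inner_smul_right, real_inner_comm]; ring
  have hinner : ∫ v, ⟪v, ξ⟫ * (f v - g v) = 0 := by
    simp_rw [hptw]
    rw [integral_inner hhv ξ, hhm, inner_zero_right]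
  have ihr : Integrable (fun v : V6 => ⟪v, ξ⟫ * (f v - g v)) := by
    have h : (fun v : V6 => ⟪v, ξ⟫ * (f v - g v)) = fun v => (innerSL ℝ ξ) ((f v - g v) • v) := by
      funext v; rw [innerSL_apply_apply]; exact hptw v
    rw [h]; exact (innerSL ℝ ξ).integrable_comp hhv
  have iT : Integrable (fun v : V6 => T v * (f v - g v)) := by
    refine (ihr.const_mul (-(2 * π))).congr (Filter.Eventually.of_forall fun v => ?_)
    simp only [hT]; ring
  have iA : Integrable (fun v : V6 => ((f v - g v : ℝ) : ℂ)) := (hfi.sub hgi).ofReal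
  have iTC : Integrable (fun v : V6 => ((T v * (f v - g v) : ℝ) : ℂ) * Complex.I) :=
    iT.ofReal.mul_const _
  have iSecond : Integrable
      (fun v : V6 => ((f v - g v : ℝ) : ℂ) + ((T v * (f v - g v) : ℝ) : ℂ) * Complex.I) :=
    iA.add iTC
  have iE : Integrable (fun v : V6 => (𝐞 (-⟪v, ξ⟫) : ℂ) * ((f v - g v : ℝ) : ℂ)) := by
    have h := (Real.fourierIntegral_convergent_iff
      (f := fun v : V6 => ((f v - g v : ℝ) : ℂ)) ξ).2 (hfi.sub hgi).ofReal
    refine h.congr (Filter.Eventually.of_forall fun v => ?_)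
    show 𝐞 (-⟪v, ξ⟫) • ((f v - g v : ℝ) : ℂ) = (𝐞 (-⟪v, ξ⟫) : ℂ) * ((f v - g v : ℝ) : ℂ)
    simp [Circle.smul_def, smul_eq_mul]
  have split : ∀ v : V6, (𝐞 (-⟪v, ξ⟫) : ℂ) * ((f v - g v : ℝ) : ℂ)
      = (Complex.exp ((T v : ℂ) * Complex.I) - 1 - (T v : ℂ) * Complex.I) * ((f v - g v : ℝ) : ℂ)
        + (((f v - g v : ℝ) : ℂ) + ((T v * (f v - g v) : ℝ) : ℂ) * Complex.I) := by
    intro v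
    rw [fourierChar_neg_eq]
    simp only [hT]
    generalize Complex.exp (((-(2 * π * ⟪v, ξ⟫) : ℝ) : ℂ) * Complex.I) = A
    push_cast
    ring
  have iFirst : Integrable (fun v : V6 =>
      (Complex.exp ((T v : ℂ) * Complex.I) - 1 - (T v : ℂ) * Complex.I)
        * ((f v - g v : ℝ) : ℂ)) := by
    refine (iE.sub iSecond).congr (Filter.Eventually.of_forall fun v => ?_)
    show (𝐞 (-⟪v, ξ⟫) : ℂ) * ((f v - g v : ℝ) : ℂ)
        - (((f v - g v : ℝ) : ℂ) + ((T v * (f v - g v) : ℝ) : ℂ) * Complex.I)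
      = (Complex.exp ((T v : ℂ) * Complex.I) - 1 - (T v : ℂ) * Complex.I) * ((f v - g v : ℝ) : ℂ)
    rw [split v]; ring
  have z1 : ∫ v : V6, ((f v - g v : ℝ) : ℂ) = 0 := by
    have h : (∫ v : V6, ((f v - g v : ℝ) : ℂ)) = ((∫ v : V6, (f v - g v) : ℝ) : ℂ) :=
      integral_ofReal
    rw [hh1] at h
    simpa using h
  have hT0 : ∫ v : V6, T v * (f v - g v) = 0 := by
    have h : (fun v : V6 => T v * (f v - g v))
        = fun v => (-(2 * π)) * (⟪v, ξ⟫ * (f v - g v)) := by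
      funext v; simp only [hT]; ring
    rw [h, integral_const_mul, hinner, mul_zero]
  have z2 : ∫ v : V6, ((T v * (f v - g v) : ℝ) : ℂ) * Complex.I = 0 := by
    rw [integral_mul_const]
    have h : (∫ v : V6, ((T v * (f v - g v) : ℝ) : ℂ))
        = ((∫ v : V6, T v * (f v - g v) : ℝ) : ℂ) := integral_ofReal
    rw [hT0] at h
    rw [h]
    simp
  have step0 : 𝓕 (fun v : V6 => (f v : ℂ)) ξ
        - 𝓕 (fun v : V6 => (g v : ℂ)) ξ
      = ∫ v : V6, (𝐞 (-⟪v, ξ⟫) : ℂ) * ((f v - g v : ℝ) : ℂ) := by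
    refine ((integral_sub ((Real.fourierIntegral_convergent_iff ξ).2 hfi.ofReal)
        ((Real.fourierIntegral_convergent_iff ξ).2 hgi.ofReal)).symm).trans
      (integral_congr_ae (Filter.Eventually.of_forall fun v => ?_))
    show 𝐞 (-⟪v, ξ⟫) • ((f v : ℂ)) - 𝐞 (-⟪v, ξ⟫) • ((g v : ℂ))
      = (𝐞 (-⟪v, ξ⟫) : ℂ) * ((f v - g v : ℝ) : ℂ)
    rw [Circle.smul_def, Circle.smul_def]
    push_cast
    simp only [smul_eq_mul]
    ring
  have maineq : 𝓕 (fun v : V6 => (f v : ℂ)) ξ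
        - 𝓕 (fun v : V6 => (g v : ℂ)) ξ
      = ∫ v : V6, (Complex.exp ((T v : ℂ) * Complex.I) - 1 - (T v : ℂ) * Complex.I)
          * ((f v - g v : ℝ) : ℂ) := by
    rw [step0]
    have h1 : ∫ v : V6, (𝐞 (-⟪v, ξ⟫) : ℂ) * ((f v - g v : ℝ) : ℂ)
        = (∫ v : V6, (Complex.exp ((T v : ℂ) * Complex.I) - 1 - (T v : ℂ) * Complex.I)
            * ((f v - g v : ℝ) : ℂ))
          + ∫ v : V6, (((f v - g v : ℝ) : ℂ) + ((T v * (f v - g v) : ℝ) : ℂ) * Complex.I) := by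
      rw [← integral_add iFirst iSecond]
      exact integral_congr_ae (Filter.Eventually.of_forall fun v => split v)
    rw [h1, integral_add iA iTC, z1, z2, add_zero, add_zero]
  rw [maineq]
  have ig : Integrable (fun v : V6 =>
      12 * π ^ 2 * ‖ξ‖ ^ 2 * (‖v‖ ^ 2 * f v + ‖v‖ ^ 2 * g v)) :=
    (hf2.add hg2).const_mul _
  refine (norm_integral_le_of_norm_le ig (Filter.Eventually.of_forall fun v => ?_)).trans ?_
  · rw [norm_mul, Complex.norm_real, Real.norm_eq_abs]
    have h1 := exp_taylor_bound (T v)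
    have h2 : |⟪v, ξ⟫| ≤ ‖v‖ * ‖ξ‖ := abs_real_inner_le_norm v ξ
    have h2' : ⟪v, ξ⟫ ^ 2 ≤ ‖v‖ ^ 2 * ‖ξ‖ ^ 2 := by
      nlinarith [abs_nonneg ⟪v, ξ⟫, _root_.sq_abs ⟪v, ξ⟫, norm_nonneg v, norm_nonneg ξ]
    have h3 : |f v - g v| ≤ f v + g v := by
      have := abs_sub (f v) (g v)
      rw [_root_.abs_of_nonneg (hf0 v), _root_.abs_of_nonneg (hg0 v)] at this
      exact this
    have h4 : ‖Complex.exp ((T v : ℂ) * Complex.I) - 1 - (T v : ℂ) * Complex.I‖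
          * |f v - g v| ≤ (3 * T v ^ 2) * (f v + g v) :=
      mul_le_mul h1 h3 (abs_nonneg _) (by positivity)
    refine h4.trans ?_
    have hTv : T v ^ 2 = 4 * π ^ 2 * ⟪v, ξ⟫ ^ 2 := by simp only [hT]; ring
    rw [hTv]
    nlinarith [mul_nonneg (sub_nonneg.2 h2') (add_nonneg (hf0 v) (hg0 v)), sq_nonneg π,
      Real.pi_pos, mul_nonneg (mul_nonneg (sq_nonneg π) (sub_nonneg.2 h2'))
        (add_nonneg (hf0 v) (hg0 v))]
  · rw [integral_const_mul, integral_add hf2 hg2]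
    apply le_of_eq
    ring

abbrev Sph := Metric.sphere (0 : E3) 1

lemma norm_sph (ω : Sph) : ‖(ω : E3)‖ = 1 := norm_eq_of_mem_sphere ω

instance : IsFiniteMeasure sphereMeasure := by
  unfold sphereMeasure; infer_instance

lemma prodIntegrable (f : V6 → ℝ) (hfi : Integrable f) (ξ : V6) :
    Integrable (fun z : V6 × Sph =>
      (𝐞 (-⟪z.1, ξ⟫) : ℂ) * (f (collide z.1 (z.2 : E3)) : ℂ)) (volume.prod sphereMeasure) := by
  have hcont : Continuous (fun z : V6 × Sph => collide z.1 (z.2 : E3)) :=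
    continuous_collide.comp (continuous_fst.prodMk (continuous_subtype_val.comp continuous_snd))
  -- a.e. strong measurability
  have hmeas : AEStronglyMeasurable
      (fun z : V6 × Sph => (f (collide z.1 (z.2 : E3)) : ℂ)) (volume.prod sphereMeasure) := by
    set f' := hfi.1.mk f with hf'
    have hsm : StronglyMeasurable f' := hfi.1.stronglyMeasurable_mk
    refine ⟨fun z => (f' (collide z.1 (z.2 : E3)) : ℂ), ?_, ?_⟩
    · exact Complex.continuous_ofReal.comp_stronglyMeasurable
        (hsm.comp_measurable hcont.measurable)
    · -- a.e. equality
      set N := {x : V6 | f x ≠ f' x} with hN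
      have hNnull : volume N = 0 := hfi.1.ae_eq_mk
      set N' := toMeasurable volume N with hN'
      have hN'null : volume N' = 0 := by rw [hN', measure_toMeasurable]; exact hNnull
      have hN'meas : MeasurableSet N' := measurableSet_toMeasurable _ _
      set Tset := (fun z : V6 × Sph => collide z.1 (z.2 : E3)) ⁻¹' N' with hT
      have hTmeas : MeasurableSet Tset := hcont.measurable hN'meas
      have hTnull : (volume.prod sphereMeasure) Tset = 0 := by
        rw [Measure.prod_apply_symm hTmeas]
        have hz : ∀ ω : Sph, volume ((fun v : V6 => (v, ω)) ⁻¹' Tset) = 0 := by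
          intro ω
          have : (fun v : V6 => (v, ω)) ⁻¹' Tset = (fun v : V6 => collide v (ω : E3)) ⁻¹' N' := rfl
          rw [this, (collide_measurePreserving (norm_sph ω)).measure_preimage
            hN'meas.nullMeasurableSet]
          exact hN'null
        simp only [hz]
        simp
      refine measure_mono_null ?_ hTnull
      intro z hz
      simp only [Set.mem_setOf_eq] at hz
      have : collide z.1 (z.2 : E3) ∈ N := by
        simp only [hN, Set.mem_setOf_eq]
        intro h
        exact hz (congrArg Complex.ofReal h)
      exact Set.mem_preimage.mpr (subset_toMeasurable _ _ this)
  have hchar : Continuous (fun z : V6 × Sph => (𝐞 (-⟪z.1, ξ⟫) : ℂ)) := by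
    refine continuous_subtype_val.comp (Real.continuous_fourierChar.comp ?_)
    exact (continuous_inner.comp (continuous_fst.prodMk continuous_const)).neg
  have hFmeas : AEStronglyMeasurable
      (fun z : V6 × Sph => (𝐞 (-⟪z.1, ξ⟫) : ℂ) * (f (collide z.1 (z.2 : E3)) : ℂ))
      (volume.prod sphereMeasure) := hchar.aestronglyMeasurable.mul hmeas
  rw [integrable_prod_iff' hFmeas]
  constructor
  · refine Filter.Eventually.of_forall fun ω => ?_
    have h1 : Integrable (fun v : V6 => (f (collide v (ω : E3)) : ℂ)) := by
      have h0 : Integrable (fun v : V6 => f (collide v (ω : E3))) :=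
        ((collide_measurePreserving (norm_sph ω)).integrable_comp
          hfi.aestronglyMeasurable).2 hfi
      exact h0.ofReal
    have h2 := (Real.fourierIntegral_convergent_iff
      (f := fun v : V6 => (f (collide v (ω : E3)) : ℂ)) ξ).2 h1
    refine h2.congr (Filter.Eventually.of_forall fun v => ?_)
    show 𝐞 (-⟪v, ξ⟫) • ((f (collide v (ω : E3)) : ℂ))
      = (𝐞 (-⟪v, ξ⟫) : ℂ) * ((f (collide v (ω : E3)) : ℂ))
    simp [Circle.smul_def, smul_eq_mul]
  · have hconst : (fun ω : Sph => ∫ v : V6, ‖(𝐞 (-⟪v, ξ⟫) : ℂ) * (f (collide v (ω : E3)) : ℂ)‖)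
        = fun _ : Sph => ∫ v : V6, |f v| := by
      funext ω
      have h1 : ∀ v : V6, ‖(𝐞 (-⟪v, ξ⟫) : ℂ) * (f (collide v (ω : E3)) : ℂ)‖
          = |f (collide v (ω : E3))| := by
        intro v
        rw [norm_mul, Complex.norm_real, Real.norm_eq_abs]
        rw [Circle.norm_coe, one_mul]
      simp_rw [h1]
      have hfun : (fun v : V6 => collide v (ω : E3)) = ⇑(collideLI (ω : E3)) :=
        funext fun v => (collideLI_apply (norm_sph ω) v).symm
      have hint := (collideLI (ω : E3)).measurePreserving.integral_comp
        (collideLI (ω : E3)).toHomeomorph.measurableEmbedding (fun v : V6 => |f v|)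
      calc ∫ v : V6, |f (collide v (ω : E3))|
          = ∫ v : V6, |f ((collideLI (ω : E3)) v)| := by rw [← hfun]
        _ = ∫ v : V6, |f v| := hint
    rw [hconst]
    exact integrable_const _

lemma integral_collide_eq (f : V6 → ℝ) (hfi : Integrable f) (ξ : V6) (ω : Sph) :
    ∫ v : V6, (𝐞 (-⟪v, ξ⟫) : ℂ) * (f (collide v (ω : E3)) : ℂ)
      = 𝓕 (fun v : V6 => (f v : ℂ)) (collide ξ (ω : E3)) := by
  have hfun : (fun v : V6 => ((f (collide v (ω : E3)) : ℝ) : ℂ))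
      = (fun v => (f v : ℂ)) ∘ ⇑(collideLI (ω : E3)) := by
    funext v; simp [collideLI_apply (norm_sph ω)]
  calc ∫ v : V6, (𝐞 (-⟪v, ξ⟫) : ℂ) * (f (collide v (ω : E3)) : ℂ)
      = 𝓕 ((fun v : V6 => (f v : ℂ)) ∘ ⇑(collideLI (ω : E3))) ξ := by
        rw [Real.fourier_eq]
        refine integral_congr_ae (Filter.Eventually.of_forall fun v => ?_)
        rw [← hfun]
        show (𝐞 (-⟪v, ξ⟫) : ℂ) * ((f (collide v (ω : E3)) : ℝ) : ℂ)
          = 𝐞 (-⟪v, ξ⟫) • ((f (collide v (ω : E3)) : ℝ) : ℂ)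
        simp [Circle.smul_def, smul_eq_mul]
    _ = 𝓕 (fun v : V6 => (f v : ℂ)) ((collideLI (ω : E3)) ξ) :=
        Real.fourier_comp_linearIsometry _ _ _
    _ = _ := by rw [collideLI_apply (norm_sph ω)]

lemma fourier_Rop (f : V6 → ℝ) (hfi : Integrable f) (ξ : V6) :
    𝓕 (fun v : V6 => (Rop f v : ℂ)) ξ
      = (sphereMeasure Set.univ).toReal⁻¹ •
        ∫ ω : Sph, 𝓕 (fun v : V6 => (f v : ℂ)) (collide ξ (ω : E3)) ∂sphereMeasure := by
  set c := (sphereMeasure Set.univ).toReal⁻¹ with hc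
  have step1 : ∀ v : V6, 𝐞 (-⟪v, ξ⟫) • ((Rop f v : ℝ) : ℂ)
      = c • ∫ ω : Sph, (𝐞 (-⟪v, ξ⟫) : ℂ) * (f (collide v (ω : E3)) : ℂ) ∂sphereMeasure := by
    intro v
    have h1 : Rop f v = c • ∫ ω : Sph, f (collide v (ω : E3)) ∂sphereMeasure := by
      rw [Rop, average_eq]; rfl
    have h2 : ((Rop f v : ℝ) : ℂ)
        = c • ∫ ω : Sph, ((f (collide v (ω : E3)) : ℝ) : ℂ) ∂sphereMeasure := by
      rw [h1]
      have h3 : (∫ ω : Sph, ((f (collide v (ω : E3)) : ℝ) : ℂ) ∂sphereMeasure)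
          = ((∫ ω : Sph, f (collide v (ω : E3)) ∂sphereMeasure : ℝ) : ℂ) := integral_ofReal
      rw [h3]
      push_cast
      simp [smul_eq_mul]
    rw [h2, Circle.smul_def, smul_comm]
    congr 1
    rw [smul_eq_mul, ← integral_const_mul]
  rw [Real.fourier_eq]
  simp_rw [step1]
  rw [integral_smul]
  congr 1
  rw [MeasureTheory.integral_integral_swap]
  · exact integral_congr_ae (Filter.Eventually.of_forall fun ω => integral_collide_eq f hfi ξ ω)
  · exact prodIntegrable f hfi ξ

lemma integrable_fourier_collide (f : V6 → ℝ) (hfi : Integrable f) (ξ : V6) :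
    Integrable (fun ω : Sph =>
      𝓕 (fun v : V6 => (f v : ℂ)) (collide ξ (ω : E3))) sphereMeasure := by
  have h := (prodIntegrable f hfi ξ).integral_prod_right
  exact h.congr (Filter.Eventually.of_forall fun ω => integral_collide_eq f hfi ξ ω)


theorem d2_R_contract (f g : V6 → ℝ)
    (hf0 : ∀ v, 0 ≤ f v) (hg0 : ∀ v, 0 ≤ g v)
    (hfi : Integrable f) (hgi : Integrable g)
    (hf1 : ∫ v, f v = 1) (hg1 : ∫ v, g v = 1)
    (hfm : ∫ v : V6, f v • v = 0) (hgm : ∫ v : V6, g v • v = 0)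
    (hf2 : Integrable fun v : V6 => ‖v‖ ^ 2 * f v)
    (hg2 : Integrable fun v : V6 => ‖v‖ ^ 2 * g v) :
    d2 (Rop f) (Rop g) ≤ d2 f g := by
  classical
  haveI hne : Nonempty {ξ : V6 // ξ ≠ 0} := by
    refine ⟨⟨EuclideanSpace.single ((0 : Fin 2), (0 : Fin 3)) 1, ?_⟩⟩
    intro h
    have h1 := congrArg (fun v : V6 => ‖v‖) h
    simp [EuclideanSpace.norm_single] at h1
  set C := 12 * π ^ 2 * ((∫ v, ‖v‖ ^ 2 * f v) + ∫ v, ‖v‖ ^ 2 * g v) with hC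
  have hbdd : BddAbove (Set.range fun ξ : {ξ : V6 // ξ ≠ 0} =>
      ‖𝓕 (fun v : V6 => (f v : ℂ)) (ξ : V6) -
        𝓕 (fun v : V6 => (g v : ℂ)) (ξ : V6)‖ / ‖(ξ : V6)‖ ^ 2) := by
    refine ⟨C, ?_⟩
    rintro x ⟨ξ, rfl⟩
    have hpos : (0 : ℝ) < ‖(ξ : V6)‖ ^ 2 := pow_pos (norm_pos_iff.2 ξ.2) 2
    rw [div_le_iff₀ hpos]
    exact fourier_diff_quadratic f g hf0 hg0 hfi hgi hf1 hg1 hfm hgm hf2 hg2 (ξ : V6)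
  have hle : ∀ η : V6, η ≠ 0 →
      ‖𝓕 (fun v : V6 => (f v : ℂ)) η -
        𝓕 (fun v : V6 => (g v : ℂ)) η‖ ≤ d2 f g * ‖η‖ ^ 2 := by
    intro η hη
    have hpos : (0 : ℝ) < ‖η‖ ^ 2 := pow_pos (norm_pos_iff.2 hη) 2
    have h : ‖𝓕 (fun v : V6 => (f v : ℂ)) η -
        𝓕 (fun v : V6 => (g v : ℂ)) η‖ / ‖η‖ ^ 2 ≤ d2 f g :=
      le_ciSup hbdd (⟨η, hη⟩ : {ξ : V6 // ξ ≠ 0})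
    rw [div_le_iff₀ hpos] at h
    exact h
  have hd2nn : 0 ≤ d2 f g := by
    obtain ⟨ξ0⟩ := hne
    have h := le_ciSup hbdd ξ0
    exact le_trans (by positivity) h
  refine ciSup_le fun ξ => ?_
  have hpos : (0 : ℝ) < ‖(ξ : V6)‖ ^ 2 := pow_pos (norm_pos_iff.2 ξ.2) 2
  rw [div_le_iff₀ hpos]
  rw [fourier_Rop f hfi, fourier_Rop g hgi, ← smul_sub]
  have hsub := integral_sub (integrable_fourier_collide f hfi (ξ : V6))
    (integrable_fourier_collide g hgi (ξ : V6))
  rw [← hsub]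
  rw [norm_smul, Real.norm_eq_abs, _root_.abs_of_nonneg (by positivity :
    (0 : ℝ) ≤ (sphereMeasure Set.univ).toReal⁻¹)]
  have hbound : ‖∫ ω : Sph, (𝓕 (fun v : V6 => (f v : ℂ)) (collide (ξ : V6) (ω : E3))
        - 𝓕 (fun v : V6 => (g v : ℂ)) (collide (ξ : V6) (ω : E3))) ∂sphereMeasure‖
      ≤ ∫ _ω : Sph, d2 f g * ‖(ξ : V6)‖ ^ 2 ∂sphereMeasure := by
    refine norm_integral_le_of_norm_le (integrable_const _)
      (Filter.Eventually.of_forall fun ω => ?_)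
    have h1 := hle (collide (ξ : V6) (ω : E3)) (collide_ne_zero (norm_sph ω) ξ.2)
    rwa [norm_collide (norm_sph ω)] at h1
  rw [integral_const, smul_eq_mul] at hbound
  have hmul : (sphereMeasure Set.univ).toReal⁻¹ * (sphereMeasure Set.univ).toReal ≤ 1 := by
    rcases eq_or_ne (sphereMeasure Set.univ).toReal 0 with h | h
    · rw [h, mul_zero]; norm_num
    · rw [inv_mul_cancel₀ h]
  calc (sphereMeasure Set.univ).toReal⁻¹
        * ‖∫ ω : Sph, (𝓕 (fun v : V6 => (f v : ℂ)) (collide (ξ : V6) (ω : E3))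
            - 𝓕 (fun v : V6 => (g v : ℂ)) (collide (ξ : V6) (ω : E3)))
          ∂sphereMeasure‖
      ≤ (sphereMeasure Set.univ).toReal⁻¹
        * ((sphereMeasure Set.univ).toReal * (d2 f g * ‖(ξ : V6)‖ ^ 2)) :=
        mul_le_mul_of_nonneg_left hbound (by positivity)
    _ = ((sphereMeasure Set.univ).toReal⁻¹ * (sphereMeasure Set.univ).toReal)
        * (d2 f g * ‖(ξ : V6)‖ ^ 2) := by ring
    _ ≤ 1 * (d2 f g * ‖(ξ : V6)‖ ^ 2) :=
        mul_le_mul_of_nonneg_right hmul (by positivity)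
    _ = d2 f g * ‖(ξ : V6)‖ ^ 2 := one_mul _
end
end

section
/- Fixed-momentum rotational average contraction: let N ≥ 1, k < N, and let O range over the subgroup 𝒪 of SO(3N) (acting on ℝ^{3N} = (ℝ³)^N) fixing the three vectors E_i = (e_i,...,e_i), with normalized Haar measure. For any η ∈ ℝ^{3N}, ∫_𝒪 ‖(Oη)^{≤k}‖² dσ(O) = (k/N)‖η‖², where (x)^{≤k} denotes the projection onto the first k blocks of ℝ³. (This uses that for any two coordinate indices i, j in {1,...,3N} corresponding to the same direction, ∫_𝒪 (Oη)_i² dσ(O) = ∫_𝒪 (Oη)_j² dσ(O).) -/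
noncomputable section
open MeasureTheory Matrix

/-- The vectors `E_i = (e_i, …, e_i) ∈ ℝ^{3N}`, for `i = 1,2,3`. -/
def Evec (N : ℕ) (i : Fin 3) : (Fin N × Fin 3) → ℝ := fun p => if p.2 = i then 1 else 0

/-- The subgroup `𝒪` of `SO(3N)` of special orthogonal matrices fixing `E₁, E₂, E₃`,
as a submonoid (it is closed under inverses since its elements are orthogonal). -/
def fixSub (N : ℕ) : Submonoid (Matrix (Fin N × Fin 3) (Fin N × Fin 3) ℝ) where
  carrier := {O | O ∈ Matrix.specialOrthogonalGroup (Fin N × Fin 3) ℝ ∧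
    ∀ i, O.mulVec (Evec N i) = Evec N i}
  one_mem' := ⟨Submonoid.one_mem _, fun i => by simp⟩
  mul_mem' := by
    rintro a b ⟨ha, ha'⟩ ⟨hb, hb'⟩
    refine ⟨Submonoid.mul_mem _ ha hb, fun i => ?_⟩
    rw [← Matrix.mulVec_mulVec, hb' i, ha' i]

instance (N : ℕ) : MeasurableSpace (Matrix (Fin N × Fin 3) (Fin N × Fin 3) ℝ) :=
  inferInstanceAs (MeasurableSpace ((Fin N × Fin 3) → (Fin N × Fin 3) → ℝ))

-- helpers
lemma mulVec_permMat {ι : Type*} [Fintype ι] [DecidableEq ι] (σ : Equiv.Perm ι) (v : ι → ℝ) :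
    (σ.toPEquiv.toMatrix : Matrix ι ι ℝ).mulVec v = v ∘ σ := by
  funext i
  simp [Matrix.mulVec, dotProduct, PEquiv.toMatrix_apply, Equiv.toPEquiv_apply]

lemma permMat_mem_orth {ι : Type*} [Fintype ι] [DecidableEq ι] (σ : Equiv.Perm ι) :
    (σ.toPEquiv.toMatrix : Matrix ι ι ℝ) ∈ Matrix.orthogonalGroup ι ℝ := by
  rw [Matrix.mem_orthogonalGroup_iff]
  have : star (σ.toPEquiv.toMatrix : Matrix ι ι ℝ) = σ.symm.toPEquiv.toMatrix := by
    rw [Matrix.star_eq_conjTranspose, Equiv.toPEquiv_symm, PEquiv.toMatrix_symm]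
    ext i j
    simp [conjTranspose_apply]
  have hT : (σ.toPEquiv.toMatrix : Matrix ι ι ℝ)ᵀ = star (σ.toPEquiv.toMatrix : Matrix ι ι ℝ) := by
    rw [Matrix.star_eq_conjTranspose]; ext i j; simp [conjTranspose_apply]
  rw [hT, this, ← PEquiv.toMatrix_trans, ← Equiv.toPEquiv_trans]
  simp [PEquiv.toMatrix_refl]

lemma measurable_entry_sq (N : ℕ) (η : (Fin N × Fin 3) → ℝ) (p : Fin N × Fin 3) :
    Measurable (fun O : fixSub N => ((O : Matrix _ _ ℝ).mulVec η p) ^ 2) := by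
  have h : Measurable (fun O : fixSub N => (O : Matrix _ _ ℝ).mulVec η p) := by
    simp only [Matrix.mulVec, dotProduct]
    apply Finset.measurable_sum
    intro q _
    exact (((measurable_pi_apply q).comp ((measurable_pi_apply p).comp (measurable_subtype_coe : Measurable (fun O : fixSub N => ((O : Matrix (Fin N × Fin 3) (Fin N × Fin 3) ℝ) : (Fin N × Fin 3) → (Fin N × Fin 3) → ℝ))))).mul measurable_const)
  exact h.pow_const 2

lemma norm_preserve (N : ℕ) (η : (Fin N × Fin 3) → ℝ) (O : fixSub N) :
    ∑ p, ((O : Matrix (Fin N × Fin 3) (Fin N × Fin 3) ℝ).mulVec η p) ^ 2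
      = ∑ p, (η p) ^ 2 := by
  have hO : (O : Matrix (Fin N × Fin 3) (Fin N × Fin 3) ℝ) ∈
      Matrix.specialOrthogonalGroup (Fin N × Fin 3) ℝ := O.2.1
  have h1 : star (O : Matrix (Fin N × Fin 3) (Fin N × Fin 3) ℝ)
      * (O : Matrix (Fin N × Fin 3) (Fin N × Fin 3) ℝ) = 1 :=
    (Matrix.mem_orthogonalGroup_iff' _ ℝ).1 ((Matrix.mem_specialOrthogonalGroup_iff.1 hO).1)
  set M : Matrix (Fin N × Fin 3) (Fin N × Fin 3) ℝ := (O : Matrix (Fin N × Fin 3) (Fin N × Fin 3) ℝ)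
  have key : M.mulVec η ⬝ᵥ M.mulVec η = η ⬝ᵥ η := by
    rw [Matrix.dotProduct_mulVec, ← Matrix.mulVec_transpose, Matrix.mulVec_mulVec]
    have : Mᵀ = star M := by
      rw [Matrix.star_eq_conjTranspose]
      ext i j; simp [conjTranspose_apply]
    rw [this, h1, Matrix.one_mulVec]
  simpa [dotProduct, sq] using key

theorem fixed_momentum_rotational_average (N k : ℕ) (hN : 1 ≤ N) (hk : k < N)
    (μ : Measure (fixSub N)) [IsProbabilityMeasure μ] [μ.IsMulLeftInvariant]
    (η : EuclideanSpace ℝ (Fin N × Fin 3)) :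
    ∫ O : fixSub N,
        (∑ p : Fin N × Fin 3, if (p.1 : ℕ) < k then ((O : Matrix _ _ ℝ).mulVec η p) ^ 2 else 0) ∂μ
      = ((k : ℝ) / N) * ‖η‖ ^ 2 := by
  classical
  -- integrability
  have hint : ∀ p : Fin N × Fin 3,
      Integrable (fun O : fixSub N => ((O : Matrix _ _ ℝ).mulVec η p) ^ 2) μ := by
    intro p
    refine (integrable_const ((∑ q, (η q)^2 : ℝ))).mono'
      ((measurable_entry_sq N η p).aestronglyMeasurable) ?_
    filter_upwards with O
    rw [Real.norm_eq_abs, abs_of_nonneg (sq_nonneg _), ← norm_preserve N η O]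
    exact Finset.single_le_sum
      (f := fun q => ((O : Matrix (Fin N × Fin 3) (Fin N × Fin 3) ℝ).mulVec η q) ^ 2)
      (fun q _ => sq_nonneg _) (Finset.mem_univ p)
  set F : (Fin N × Fin 3) → ℝ :=
    fun p => ∫ O : fixSub N, ((O : Matrix _ _ ℝ).mulVec η p) ^ 2 ∂μ with hF
  -- invariance under elements of fixSub
  have hinv : ∀ (g : fixSub N) (p : Fin N × Fin 3),
      (∫ O : fixSub N, (((g : Matrix (Fin N × Fin 3) (Fin N × Fin 3) ℝ)
        * (O : Matrix (Fin N × Fin 3) (Fin N × Fin 3) ℝ)).mulVec η p) ^ 2 ∂μ) = F p := by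
    intro g p
    have hmul : Measurable (fun O : fixSub N => g * O) := by
      apply Measurable.subtype_mk
      show Measurable fun O : fixSub N => (g : Matrix (Fin N × Fin 3) (Fin N × Fin 3) ℝ) * (O : Matrix (Fin N × Fin 3) (Fin N × Fin 3) ℝ)
      apply measurable_pi_lambda; intro i
      apply measurable_pi_lambda; intro j
      simp only [Matrix.mul_apply]
      apply Finset.measurable_sum
      intro q _
      exact measurable_const.mul ((measurable_pi_apply j).comp ((measurable_pi_apply q).comp (measurable_subtype_coe : Measurable (fun O : fixSub N => ((O : Matrix (Fin N × Fin 3) (Fin N × Fin 3) ℝ) : (Fin N × Fin 3) → (Fin N × Fin 3) → ℝ)))))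
    have hmap : Measure.map (fun O : fixSub N => g * O) μ = μ :=
      MeasureTheory.map_mul_left_eq_self μ g
    have := integral_map (μ := μ) hmul.aemeasurable
      (f := fun O : fixSub N => ((O : Matrix _ _ ℝ).mulVec η p) ^ 2)
      (by rw [hmap]; exact (measurable_entry_sq N η p).aestronglyMeasurable)
    rw [hmap] at this
    rw [hF]
    exact this.symm
  -- F constant across blocks
  have hswap : ∀ (n m : Fin N) (j : Fin 3), F (n, j) = F (m, j) := by
    intro n m j
    by_cases hnm : n = m
    · rw [hnm]
    obtain ⟨j', hj'⟩ : ∃ j' : Fin 3, j' ≠ j := by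
      fin_cases j
      exacts [⟨1, by decide⟩, ⟨0, by decide⟩, ⟨0, by decide⟩]
    set τ : Equiv.Perm (Fin N × Fin 3) :=
      Equiv.swap (n, j) (m, j) * Equiv.swap (n, j') (m, j') with hτ
    have hτ2 : ∀ p : Fin N × Fin 3, (τ p).2 = p.2 := by
      intro p
      have h2 : ∀ (a b : Fin N) (c : Fin 3) (q : Fin N × Fin 3),
          (Equiv.swap (a, c) (b, c) q).2 = q.2 := by
        intro a b c q
        rcases eq_or_ne q (a, c) with h | h
        · simp [h]
        rcases eq_or_ne q (b, c) with h' | h'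
        · simp [h']
        · rw [Equiv.swap_apply_of_ne_of_ne h h']
      rw [hτ]
      simp only [Equiv.Perm.mul_apply]
      rw [h2, h2]
    set g : Matrix (Fin N × Fin 3) (Fin N × Fin 3) ℝ := τ.toPEquiv.toMatrix with hg
    have hgmem : g ∈ fixSub N := by
      constructor
      · rw [Matrix.mem_specialOrthogonalGroup_iff]
        refine ⟨permMat_mem_orth τ, ?_⟩
        have : g.det = (Equiv.Perm.sign τ : ℝ) := Matrix.det_permutation τ
        rw [this, hτ]
        have hne1 : (n, j) ≠ (m, j) := fun h => hnm (congrArg Prod.fst h)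
        have hne2 : (n, j') ≠ (m, j') := fun h => hnm (congrArg Prod.fst h)
        rw [Equiv.Perm.sign_mul, Equiv.Perm.sign_swap hne1, Equiv.Perm.sign_swap hne2]
        norm_num
      · intro i
        rw [hg, mulVec_permMat]
        funext p
        show Evec N i (τ p) = Evec N i p
        simp only [Evec, hτ2 p]
    have hτnj : τ (n, j) = (m, j) := by
      have h0 : Equiv.swap (n, j') (m, j') (n, j) = (n, j) :=
        Equiv.swap_apply_of_ne_of_ne (by simp [Prod.ext_iff, Ne.symm hj'])
          (by simp [Prod.ext_iff, Ne.symm hj'])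
      rw [hτ]
      simp only [Equiv.Perm.mul_apply]
      rw [h0, Equiv.swap_apply_left]
    have key := hinv ⟨g, hgmem⟩ (n, j)
    have : (fun O : fixSub N => ((g * (O : Matrix (Fin N × Fin 3) (Fin N × Fin 3) ℝ)).mulVec η (n, j)) ^ 2)
        = fun O : fixSub N => (((O : Matrix (Fin N × Fin 3) (Fin N × Fin 3) ℝ)).mulVec η (m, j)) ^ 2 := by
      funext O
      rw [← Matrix.mulVec_mulVec, hg, mulVec_permMat]
      show (((O : Matrix _ _ ℝ).mulVec η) (τ (n, j))) ^ 2 = _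
      rw [hτnj]
    rw [this] at key
    exact (key).symm
  -- swap integral and sum
  have hsum : (∫ O : fixSub N,
      (∑ p : Fin N × Fin 3, if (p.1 : ℕ) < k then ((O : Matrix _ _ ℝ).mulVec η p) ^ 2 else 0) ∂μ)
      = ∑ p : Fin N × Fin 3, if (p.1 : ℕ) < k then F p else 0 := by
    rw [integral_finset_sum]
    · refine Finset.sum_congr rfl fun p _ => ?_
      split_ifs
      · rfl
      · simp
    · intro p _
      split_ifs
      · exact hint p
      · simp
  rw [hsum]
  -- total sum of F
  have htotal : ∑ p : Fin N × Fin 3, F p = ‖η‖ ^ 2 := by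
    rw [hF, ← integral_finset_sum _ (fun p _ => hint p)]
    have : ∀ O : fixSub N,
        ∑ p, ((O : Matrix (Fin N × Fin 3) (Fin N × Fin 3) ℝ).mulVec η p) ^ 2 = ‖η‖ ^ 2 := by
      intro O
      rw [norm_preserve N η O]
      rw [EuclideanSpace.norm_eq]
      rw [Real.sq_sqrt (Finset.sum_nonneg fun q _ => sq_nonneg _)]
      exact Finset.sum_congr rfl fun q _ => by rw [Real.norm_eq_abs, sq_abs]
    simp only [this]
    simp
  -- rewrite sums over product
  set c : ℝ := ∑ j : Fin 3, F (⟨0, hN⟩, j) with hc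
  have hFrow : ∀ n : Fin N, ∑ j : Fin 3, F (n, j) = c := by
    intro n
    exact Finset.sum_congr rfl fun j _ => hswap n ⟨0, hN⟩ j
  have htotal' : (N : ℝ) * c = ‖η‖ ^ 2 := by
    rw [← htotal, Fintype.sum_prod_type]
    simp only [hFrow]
    simp [mul_comm]
  have hlhs : ∑ p : Fin N × Fin 3, (if (p.1 : ℕ) < k then F p else 0) = (k : ℝ) * c := by
    rw [Fintype.sum_prod_type]
    have : ∀ n : Fin N, (∑ j : Fin 3, if (n : ℕ) < k then F (n, j) else 0)
        = if (n : ℕ) < k then c else 0 := by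
      intro n
      split_ifs with h
      · simp only [if_pos h] at *
        exact hFrow n
      · simp
    simp only [this]
    rw [Fin.sum_univ_eq_sum_range (fun i => if i < k then c else 0) N]
    rw [← Finset.sum_filter]
    have hfil : (Finset.range N).filter (· < k) = Finset.range k := by
      ext i; simp; omega
    rw [hfil, Finset.sum_const, Finset.card_range, nsmul_eq_mul]
  rw [hlhs, ← htotal']
  have hNne : (N : ℝ) ≠ 0 := by positivity
  field_simp
end
end
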